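/- For coprime positive integers p, q and any integer n \geq p + q, there exists a Young diagram D with |D| = n and a box c \in D such that p \cdot l(c) = q \cdot (a(c) + 1). -/
import Mathlib


/-- A Young diagram: a finite down-closed subset of ℕ². -/
def IsYoung (D : Finset (ℕ × ℕ)) : Prop :=
  ∀ x y x' y', (x, y) ∈ D → x' ≤ x → y' ≤ y → (x', y') ∈ D

/-- Arm length of a box inside the diagram. -/
def arm (D : Finset (ℕ × ℕ)) (c : ℕ × ℕ) : ℕ :=
  (D.filter fun d => d.2 = c.2 ∧ c.1 < d.1).card

/-- Leg length of a box inside the diagram. -/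
def leg (D : Finset (ℕ × ℕ)) (c : ℕ × ℕ) : ℕ :=
  (D.filter fun d => d.1 = c.1 ∧ c.2 < d.2).card

/-- Arm length of a box in the complement of the diagram. -/
def coArm (D : Finset (ℕ × ℕ)) (c : ℕ × ℕ) : ℕ :=
  ((Finset.range c.1).filter fun x' => (x', c.2) ∉ D).card

/-- Leg length of a box in the complement of the diagram. -/
def coLeg (D : Finset (ℕ × ℕ)) (c : ℕ × ℕ) : ℕ :=
  ((Finset.range c.2).filter fun y' => (c.1, y') ∉ D).card

theorem exists_diagram_with_slope_plus (p q n : ℕ) (hp : 0 < p) (hq : 0 < q)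
    (hpq : Nat.Coprime p q) (hn : p + q ≤ n) :
    ∃ D : Finset (ℕ × ℕ), IsYoung D ∧ D.card = n ∧
      ∃ c ∈ D, p * leg D c = q * (arm D c + 1) := by
  set m := n - (p + q) with hm
  set k := m / p with hk
  set r := m % p with hr
  have hrp : r < p := Nat.mod_lt _ hp
  have hkr : k * p + r = m := by rw [hk, hr, Nat.mul_comm]; exact Nat.div_add_mod m p
  set D : Finset (ℕ × ℕ) :=
    ((Finset.range p) ×ˢ (Finset.range (k + q + 1))).filter
      (fun d => d.1 = 0 ∨ d.2 ≤ k ∨ (d.2 = k + 1 ∧ d.1 ≤ r)) with hD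
  have hmem : ∀ d : ℕ × ℕ, d ∈ D ↔
      d.1 < p ∧ d.2 < k + q + 1 ∧ (d.1 = 0 ∨ d.2 ≤ k ∨ (d.2 = k + 1 ∧ d.1 ≤ r)) := by
    intro d
    simp [hD, Finset.mem_filter, Finset.mem_product, and_assoc]
  refine ⟨D, ?_, ?_, (0, k), ?_, ?_⟩
  · intro x y x' y' hxy hx hy
    rw [hmem] at hxy ⊢
    simp only at hxy ⊢
    omega
  · -- cardinality
    have hsplit : D = (Finset.range p ×ˢ Finset.range (k + 1)) ∪
        ({0} ×ˢ Finset.Ico (k + 1) (k + q + 1)) ∪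
        (Finset.Icc 1 r ×ˢ {k + 1}) := by
      ext d
      rw [hmem]
      simp only [Finset.mem_union, Finset.mem_product, Finset.mem_range, Finset.mem_Ico,
        Finset.mem_Icc, Finset.mem_singleton]
      omega
    have d1 : Disjoint (Finset.range p ×ˢ Finset.range (k + 1))
        ({0} ×ˢ Finset.Ico (k + 1) (k + q + 1)) := by
      rw [Finset.disjoint_left]
      intro a ha hb
      simp only [Finset.mem_product, Finset.mem_range, Finset.mem_Ico,
        Finset.mem_singleton] at ha hb
      omega
    have d2 : Disjoint ((Finset.range p ×ˢ Finset.range (k + 1)) ∪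
        ({0} ×ˢ Finset.Ico (k + 1) (k + q + 1))) (Finset.Icc 1 r ×ˢ {k + 1}) := by
      rw [Finset.disjoint_left]
      intro a ha hb
      simp only [Finset.mem_union, Finset.mem_product, Finset.mem_range, Finset.mem_Ico,
        Finset.mem_Icc, Finset.mem_singleton] at ha hb
      omega
    rw [hsplit, Finset.card_union_of_disjoint d2, Finset.card_union_of_disjoint d1]
    simp [Nat.card_Icc, Nat.card_Ico]
    have hx : p * (k + 1) = k * p + p := by ring
    omega
  · rw [hmem]; simp; omega
  · -- the numerics
    have harm : arm D (0, k) = p - 1 := by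
      have : D.filter (fun d => d.2 = (0, k).2 ∧ (0, k).1 < d.1) =
          Finset.Ico 1 p ×ˢ {k} := by
        ext d
        rw [Finset.mem_filter, hmem]
        simp only [Finset.mem_product, Finset.mem_Ico, Finset.mem_singleton]
        omega
      rw [arm, this]
      simp
    have hleg : leg D (0, k) = q := by
      have : D.filter (fun d => d.1 = (0, k).1 ∧ (0, k).2 < d.2) =
          {0} ×ˢ Finset.Ico (k + 1) (k + q + 1) := by
        ext d
        rw [Finset.mem_filter, hmem]
        simp only [Finset.mem_product, Finset.mem_Ico, Finset.mem_singleton]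
        omega
      rw [leg, this]
      simp
    rw [harm, hleg]
    have : p - 1 + 1 = p := Nat.succ_pred_eq_of_pos hp
    rw [this, Nat.mul_comm]
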